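/- Let K be a field of characteristic zero and let t ∈ K. For every pair (x, y) ∈ K × K satisfying y² = x·(x − 4)·(P(x) − t), the pair (u, v) = (P(x), y·Q(x)) satisfies v² = u·(u − 1)·(u − t). Equivalently, the polynomial identity P(X)·(P(X) − 1) = X·(X − 4)·Q(X)² holds in K[X]. (Thus π(x, y) = (P(x), y·Q(x)) defines the degree-3 origami covering from the genus-2 curve X_t : y² = x(x−4)(P(x)−t) to the Legendre elliptic curve E_t : v² = u(u−1)(u−t), as in Proposition 4.1 for the origami L(2,2).) -/
import Mathlib


open Polynomial

/-- Proposition 4.1 (origami `L(2,2)`): with `P(X) = (1/4)·X·(X−3)²` and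
`Q(X) = (1/4)·(X−3)·(X−1)`, every point `(x,y)` of the curve
`y² = x(x−4)(P(x)−t)` maps under `(x,y) ↦ (P(x), y·Q(x))` to a point of the
Legendre curve `v² = u(u−1)(u−t)`; equivalently, the polynomial identity
`P(X)·(P(X)−1) = X·(X−4)·Q(X)²` holds in `K[X]`. -/
theorem stmt_0 (K : Type*) [Field K] [CharZero K] (t : K) :
    (∀ x y : K,
      y ^ 2 = x * (x - 4) * ((1 / 4) * x * (x - 3) ^ 2 - t) →
      (y * ((1 / 4) * (x - 3) * (x - 1))) ^ 2 =
        ((1 / 4) * x * (x - 3) ^ 2) * ((1 / 4) * x * (x - 3) ^ 2 - 1) *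
          ((1 / 4) * x * (x - 3) ^ 2 - t)) ∧
    (C (1 / 4 : K) * X * (X - 3) ^ 2) * (C (1 / 4 : K) * X * (X - 3) ^ 2 - 1) =
      X * (X - 4) * (C (1 / 4 : K) * (X - 3) * (X - 1)) ^ 2 := by
  constructor
  · intro x y h
    rw [mul_pow, h]
    ring
  · apply Polynomial.funext
    intro x
    simp only [eval_mul, eval_sub, eval_pow, eval_X, eval_one, eval_C, eval_ofNat]
    ring
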